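/- Let n ≥ 1 and let p_1, …, p_n be integers with p_i ≥ 2. Then every typical rank r of format (p_1, …, p_n) over ℝ satisfies r · (p_1 + p_2 + ⋯ + p_n − n + 1) ≥ p_1 p_2 ⋯ p_n. -/

import Mathlib

open MeasureTheory

noncomputable section

/-- The rank-one tensor `a₁ ⊗ ⋯ ⊗ aₙ`. -/
def rankOneTensor {n : ℕ} (p : Fin n → ℕ) (a : ∀ i, Fin (p i) → ℝ) :
    (∀ i, Fin (p i)) → ℝ :=
  fun k => ∏ i, a i (k i)

/-- The rank of a tensor: the least `r` such that `T` is a sum of `r` rank-one tensors. -/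
def tensorRank {n : ℕ} (p : Fin n → ℕ) (T : (∀ i, Fin (p i)) → ℝ) : ℕ :=
  sInf {r | ∃ a : Fin r → ∀ i, Fin (p i) → ℝ, T = ∑ h, rankOneTensor p (a h)}

/-- `r` is a typical rank of format `p` over `ℝ`: the set of tensors of rank exactly `r`
has positive Lebesgue measure. -/
def IsTypicalRank {n : ℕ} (p : Fin n → ℕ) (r : ℕ) : Prop :=
  0 < volume {T : (∀ i, Fin (p i)) → ℝ | tensorRank p T = r}

open Set Module
open scoped NNReal ENNReal

section Aux

variable {n : ℕ}

/-- A finite product of `C¹` functions is `C¹`. -/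
lemma contDiff_finset_prod' {E : Type*} [NormedAddCommGroup E] [NormedSpace ℝ E]
    {ι : Type*} (s : Finset ι) (f : ι → E → ℝ) (h : ∀ i, ContDiff ℝ 1 (f i)) :
    ContDiff ℝ 1 (fun x => ∏ i ∈ s, f i x) := by
  classical
  induction s using Finset.induction_on with
  | empty => simpa using contDiff_const
  | insert _ _ hi ih =>
      simp only [Finset.prod_insert hi]
      exact (h _).mul ih

/-- Every tensor admits some rank-one decomposition. -/
lemma exists_rep (hn : 1 ≤ n) (p : Fin n → ℕ) (T : (∀ i, Fin (p i)) → ℝ) :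
    {r | ∃ a : Fin r → ∀ i, Fin (p i) → ℝ, T = ∑ h, rankOneTensor p (a h)}.Nonempty := by
  classical
  set i0 : Fin n := ⟨0, hn⟩ with hi0
  let σ : Fin (Fintype.card (∀ i, Fin (p i))) ≃ (∀ i, Fin (p i)) :=
    (Fintype.equivFin (∀ i, Fin (p i))).symm
  let A : (∀ i, Fin (p i)) → ∀ i, Fin (p i) → ℝ := fun e i j =>
    if j = e i then (if i = i0 then T e else 1) else 0
  have key : ∀ e k : ∀ i, Fin (p i), rankOneTensor p (A e) k = if k = e then T e else 0 := by
    intro e k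
    by_cases hk : k = e
    · subst hk
      rw [if_pos rfl]
      have h1 : rankOneTensor p (A k) k = ∏ i, (if i = i0 then T k else 1) := by
        apply Finset.prod_congr rfl
        intro i _
        simp [A]
      rw [h1, Finset.prod_ite_eq' Finset.univ i0 (fun _ => T k)]
      simp
    · rw [if_neg hk]
      obtain ⟨i, hi⟩ : ∃ i, k i ≠ e i := by
        by_contra hco
        push_neg at hco
        exact hk (funext hco)
      exact Finset.prod_eq_zero (Finset.mem_univ i) (by simp [A, hi])
  refine ⟨Fintype.card (∀ i, Fin (p i)), fun h => A (σ h), ?_⟩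
  funext k
  rw [Finset.sum_apply]
  rw [Fintype.sum_equiv σ (fun h => rankOneTensor p (A (σ h)) k)
    (fun e => rankOneTensor p (A e) k) (fun h => rfl)]
  simp only [key]
  rw [Finset.sum_ite_eq Finset.univ k T]
  simp

variable (p : Fin n → ℕ)

/-- The chart map: a normalized parametrization of sums of `r` rank-one tensors,
with the coordinates `c h i` (for `i ≠ 0`) pinned to `1`. -/
def chartMap (hn : 1 ≤ n) (r : ℕ) (c : Fin r → ∀ i, Fin (p i)) :
    (∀ _h : Fin r, ∀ i : Fin n, {j : Fin (p i) // i = ⟨0, hn⟩ ∨ j ≠ c _h i} → ℝ) →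
      ((∀ i, Fin (p i)) → ℝ) := fun x =>
  ∑ h, rankOneTensor p (fun i j =>
    if hj : i = ⟨0, hn⟩ ∨ j ≠ c h i then x h i ⟨j, hj⟩ else 1)

lemma chartMap_contDiff (hn : 1 ≤ n) (r : ℕ) (c : Fin r → ∀ i, Fin (p i)) :
    ContDiff ℝ 1 (chartMap p hn r c) := by
  rw [contDiff_pi]
  intro k
  have : (fun x => chartMap p hn r c x k) =
      fun x => ∑ h : Fin r, ∏ i : Fin n,
        (if hj : i = ⟨0, hn⟩ ∨ k i ≠ c h i then x h i ⟨k i, hj⟩ else 1) := by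
    funext x
    simp [chartMap, rankOneTensor, Finset.sum_apply]
  rw [this]
  apply ContDiff.sum
  intro h _
  apply contDiff_finset_prod'
  intro i
  by_cases hj : i = ⟨0, hn⟩ ∨ k i ≠ c h i
  · simp only [dif_pos hj]
    exact ContinuousLinearMap.contDiff
      ((ContinuousLinearMap.proj (⟨k i, hj⟩ : {j : Fin (p i) // i = ⟨0, hn⟩ ∨ j ≠ c h i})).comp
        ((ContinuousLinearMap.proj i).comp
          (ContinuousLinearMap.proj (R := ℝ)
            (φ := fun _h : Fin r => ∀ i : Fin n, {j : Fin (p i) // i = ⟨0, hn⟩ ∨ j ≠ c _h i} → ℝ)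
            h)))
  · simp only [dif_neg hj]
    exact contDiff_const

lemma chartMap_covers (hn : 1 ≤ n) (hp : ∀ i, 2 ≤ p i) (r : ℕ)
    (T : (∀ i, Fin (p i)) → ℝ) (a : Fin r → ∀ i, Fin (p i) → ℝ)
    (hT : T = ∑ h, rankOneTensor p (a h)) :
    ∃ c : Fin r → ∀ i, Fin (p i), T ∈ Set.range (chartMap p hn r c) := by
  classical
  set i0 : Fin n := ⟨0, hn⟩ with hi0
  -- For each summand, build normalized vectors `b h` and pins `c h`.
  have master : ∀ h : Fin r, ∃ (b : ∀ i, Fin (p i) → ℝ) (ch : ∀ i, Fin (p i)),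
      (∀ i, i ≠ i0 → b i (ch i) = 1) ∧ rankOneTensor p b = rankOneTensor p (a h) := by
    intro h
    by_cases hz : ∀ i, a h i ≠ 0
    · -- choose nonzero coordinates
      have hch : ∀ i, ∃ j, a h i j ≠ 0 := by
        intro i
        by_contra hco
        push_neg at hco
        exact hz i (funext hco)
      choose ch hch' using hch
      set P : ℝ := ∏ i ∈ Finset.univ.erase i0, a h i (ch i) with hP
      have hPne : P ≠ 0 := Finset.prod_ne_zero_iff.2 fun i _ => hch' i
      refine ⟨fun i => if i = i0 then P • a h i else (a h i (ch i))⁻¹ • a h i,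
        ch, ?_, ?_⟩
      · intro i hi
        simp only [if_neg hi, Pi.smul_apply, smul_eq_mul]
        exact inv_mul_cancel₀ (hch' i)
      · funext k
        have hfac : ∀ i : Fin n,
            (if i = i0 then P • a h i else (a h i (ch i))⁻¹ • a h i) (k i)
              = (if i = i0 then P else (a h i (ch i))⁻¹) * a h i (k i) := by
          intro i
          by_cases hi : i = i0 <;> simp [hi]
        calc (∏ i, (if i = i0 then P • a h i else (a h i (ch i))⁻¹ • a h i) (k i))
            = ∏ i, ((if i = i0 then P else (a h i (ch i))⁻¹) * a h i (k i)) :=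
              Finset.prod_congr rfl fun i _ => hfac i
          _ = (∏ i, (if i = i0 then P else (a h i (ch i))⁻¹)) * ∏ i, a h i (k i) :=
              Finset.prod_mul_distrib
          _ = ∏ i, a h i (k i) := by
              have h2 : (∏ i, (if i = i0 then P else (a h i (ch i))⁻¹)) = 1 := by
                rw [← Finset.mul_prod_erase Finset.univ _ (Finset.mem_univ i0)]
                rw [if_pos rfl]
                have h3 : (∏ i ∈ Finset.univ.erase i0,
                    (if i = i0 then P else (a h i (ch i))⁻¹)) = P⁻¹ := by
                  rw [hP, ← Finset.prod_inv_distrib]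
                  apply Finset.prod_congr rfl
                  intro i hi
                  rw [if_neg (Finset.ne_of_mem_erase hi)]
                rw [h3, mul_inv_cancel₀ hPne]
              rw [h2, one_mul]
    · -- a zero factor: the summand is the zero tensor
      push_neg at hz
      obtain ⟨i₁, hi₁⟩ := hz
      refine ⟨fun i => if i = i0 then 0 else 1,
        fun i => ⟨0, lt_of_lt_of_le two_pos (hp i)⟩, ?_, ?_⟩
      · intro i hi; simp [if_neg hi]
      · funext k
        have hl : (∏ i, (if i = i0 then (0 : Fin (p i) → ℝ) else 1) (k i)) = 0 :=
          Finset.prod_eq_zero (Finset.mem_univ i0) (by simp)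
        have hr : (∏ i, a h i (k i)) = 0 :=
          Finset.prod_eq_zero (Finset.mem_univ i₁) (by simp [hi₁])
        show (∏ i, (if i = i0 then (0 : Fin (p i) → ℝ) else 1) (k i))
            = ∏ i, a h i (k i)
        rw [hl, hr]
  choose b c hb1 hb2 using master
  refine ⟨c, fun h i j => b h i j, ?_⟩
  have heq : ∀ h : Fin r,
      (fun i j => if hj : i = i0 ∨ j ≠ c h i then b h i j else 1) = b h := by
    intro h
    funext i j
    by_cases hj : i = i0 ∨ j ≠ c h i
    · rw [dif_pos hj]
    · rw [dif_neg hj]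
      push_neg at hj
      rw [hj.2]
      exact (hb1 h i hj.1).symm
  show (∑ h, rankOneTensor p
      (fun i j => if hj : i = i0 ∨ j ≠ c h i then b h i j else 1)) = T
  symm
  rw [hT]
  apply Finset.sum_congr rfl
  intro h _
  rw [← hb2 h]
  exact (congrArg (rankOneTensor p) (heq h)).symm

end Aux

/-- Every typical rank `r` of format `(p₁,…,pₙ)` over `ℝ` satisfies
`r·(p₁ + ⋯ + pₙ − n + 1) ≥ p₁⋯pₙ`. -/
theorem typical_rank_lower_bound
    {n : ℕ} (hn : 1 ≤ n) (p : Fin n → ℕ) (hp : ∀ i, 2 ≤ p i)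
    (r : ℕ) (hr : IsTypicalRank p r) :
    (∏ i, (p i : ℤ)) ≤ (r : ℤ) * ((∑ i, (p i : ℤ)) - n + 1) := by
  classical
  set i0 : Fin n := ⟨0, hn⟩ with hi0
  set s : ℕ := ∑ i, p i with hs
  set D : ℕ := ∏ i, p i with hD
  have hns : n ≤ s := by
    calc n = ∑ _i : Fin n, 1 := by simp
      _ ≤ s := Finset.sum_le_sum fun i _ => le_trans one_le_two (hp i)
  -- key natural-number inequality
  have key : D ≤ r * (s - (n - 1)) := by
    by_contra hlt
    push_neg at hlt
    -- dimension of each chart domain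
    have hdim : ∀ (c : Fin r → ∀ i, Fin (p i)),
        finrank ℝ (∀ _h : Fin r, ∀ i : Fin n,
          {j : Fin (p i) // i = i0 ∨ j ≠ c _h i} → ℝ) = r * (s - (n - 1)) := by
      intro c
      rw [finrank_pi_fintype ℝ]
      have hinner : ∀ h : Fin r,
          finrank ℝ (∀ i : Fin n, {j : Fin (p i) // i = i0 ∨ j ≠ c h i} → ℝ)
            = s - (n - 1) := by
        intro h
        rw [finrank_pi_fintype ℝ]
        have hcard : ∀ i : Fin n,
            finrank ℝ ({j : Fin (p i) // i = i0 ∨ j ≠ c h i} → ℝ)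
              + (if i = i0 then 0 else 1) = p i := by
          intro i
          rw [Module.finrank_fintype_fun_eq_card]
          by_cases hi : i = i0
          · rw [if_pos hi]
            rw [Fintype.card_congr (Equiv.subtypeUnivEquiv (fun j => Or.inl hi))]
            simp
          · rw [if_neg hi]
            rw [Fintype.card_congr (Equiv.subtypeEquivRight
              (fun j => by simp [hi] : ∀ j : Fin (p i),
                (i = i0 ∨ j ≠ c h i) ↔ ¬ (j = c h i)))]
            rw [Fintype.card_subtype_compl, Fintype.card_subtype_eq, Fintype.card_fin]
            have := hp i
            omega
        have hsum : (∑ i : Fin n,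
            finrank ℝ ({j : Fin (p i) // i = i0 ∨ j ≠ c h i} → ℝ))
            + (∑ i : Fin n, (if i = i0 then 0 else 1)) = s := by
          rw [← Finset.sum_add_distrib]
          rw [Finset.sum_congr rfl (fun i (_ : i ∈ Finset.univ) => hcard i)]
        have hone : (∑ i : Fin n, (if i = i0 then 0 else 1)) = n - 1 := by
          apply Nat.eq_sub_of_add_eq
          have h1 : (∑ i : Fin n, (if i = i0 then (1 : ℕ) else 0)) = 1 := by
            rw [Finset.sum_ite_eq' Finset.univ i0 (fun _ => 1)]
            simp
          calc (∑ i : Fin n, (if i = i0 then 0 else 1)) + 1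
              = (∑ i : Fin n, (if i = i0 then (0:ℕ) else 1))
                + (∑ i : Fin n, (if i = i0 then (1:ℕ) else 0)) := by rw [h1]
            _ = ∑ i : Fin n, ((if i = i0 then (0:ℕ) else 1)
                + (if i = i0 then (1:ℕ) else 0)) := Finset.sum_add_distrib.symm
            _ = ∑ _i : Fin n, 1 := by
                apply Finset.sum_congr rfl
                intro i _
                by_cases hi : i = i0 <;> simp [hi]
            _ = n := by simp
        rw [hone] at hsum
        exact Nat.eq_sub_of_add_eq hsum
      rw [Finset.sum_congr rfl (fun h (_ : h ∈ Finset.univ) => hinner h)]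
      simp [mul_comm]
    -- each chart image is null
    have hnull : ∀ (c : Fin r → ∀ i, Fin (p i)),
        volume (Set.range (chartMap p hn r c)) = 0 := by
      intro c
      have hcard : Fintype.card (∀ i, Fin (p i)) = D := by
        simp [hD, Fintype.card_pi]
      have hac : (volume : Measure ((∀ i, Fin (p i)) → ℝ)) ≪ μH[((D : ℝ≥0) : ℝ)] := by
        have : ((D : ℝ≥0) : ℝ) = ((Fintype.card (∀ i, Fin (p i)) : ℕ) : ℝ) := by
          rw [hcard]; simp
        rw [this, hausdorffMeasure_pi_real]
      refine measure_zero_of_dimH_lt hac ?_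
      calc dimH (Set.range (chartMap p hn r c))
          ≤ (finrank ℝ (∀ _h : Fin r, ∀ i : Fin n,
              {j : Fin (p i) // i = i0 ∨ j ≠ c _h i} → ℝ) : ℝ≥0∞) :=
            (chartMap_contDiff p hn r c).dimH_range_le
        _ = ((r * (s - (n - 1)) : ℕ) : ℝ≥0∞) := by rw [hdim c]
        _ < ((D : ℝ≥0) : ℝ≥0∞) := by
            rw [show ((D : ℝ≥0) : ℝ≥0∞) = ((D : ℕ) : ℝ≥0∞) by simp]
            exact_mod_cast hlt
    -- the rank-r set is contained in the union of chart images
    have hsub : {T : (∀ i, Fin (p i)) → ℝ | tensorRank p T = r}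
        ⊆ ⋃ c : Fin r → ∀ i, Fin (p i), Set.range (chartMap p hn r c) := by
      intro T hT
      have hmem : r ∈ {r' | ∃ a : Fin r' → ∀ i, Fin (p i) → ℝ,
          T = ∑ h, rankOneTensor p (a h)} := by
        rw [← hT]
        exact Nat.sInf_mem (exists_rep hn p T)
      obtain ⟨a, ha⟩ := hmem
      obtain ⟨c, hc⟩ := chartMap_covers p hn hp r T a ha
      exact Set.mem_iUnion.2 ⟨c, hc⟩
    have : volume {T : (∀ i, Fin (p i)) → ℝ | tensorRank p T = r} = 0 :=
      measure_mono_null hsub (measure_iUnion_null hnull)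
    rw [IsTypicalRank, this] at hr
    exact lt_irrefl 0 hr
  -- cast the inequality to ℤ
  have h1 : (∏ i, (p i : ℤ)) = ((D : ℕ) : ℤ) := by rw [hD]; push_cast; rfl
  have h2 : (∑ i, (p i : ℤ)) = ((s : ℕ) : ℤ) := by rw [hs]; push_cast; rfl
  rw [h1, h2]
  have h3 : (((r * (s - (n - 1)) : ℕ)) : ℤ) = (r : ℤ) * (((s : ℕ) : ℤ) - n + 1) := by
    push_cast [Nat.cast_sub (by omega : n - 1 ≤ s)]
    have : ((n - 1 : ℕ) : ℤ) = (n : ℤ) - 1 := by omega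
    rw [this]; ring
  calc ((D : ℕ) : ℤ) ≤ ((r * (s - (n - 1)) : ℕ) : ℤ) := by exact_mod_cast key
    _ = (r : ℤ) * (((s : ℕ) : ℤ) - n + 1) := h3

end
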